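/- Let A be a Z-tensor with majorization matrix M (M_{ij} = a_{ij...j}), write A = M_tensor − N where the tensor M_tensor contains the entries a_{ij...j} and N ≥ 0 contains all mixed-index entries, and let M = P − Q with P a nonsingular M-matrix and Q ≥ 0 a matrix. Let b ≥ 0 and suppose there exists x ≥ 0 with A x^{m-1} ≥ b. Then the sequence defined by x_0 = 0 and P x_{k+1}^{[m-1]} = Q x_k^{[m-1]} + N x_k^{m-1} + b is well-defined, monotonically increasing, bounded above by every element of {x ≥ 0 : A x^{m-1} ≥ b}, and converges to the minimal nonnegative solution of A x^{m-1} = b. -/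

import Mathlib

open Finset Filter

noncomputable section

/-- Action of an order-(p+1) tensor (p trailing indices):
`(A x^{p})_i = ∑ a_{i i₂ … i_{p+1}} x_{i₂} ⋯ x_{i_{p+1}}`. -/
def tapp (p n : ℕ) (A : Fin n → (Fin p → Fin n) → ℝ) (x : Fin n → ℝ) : Fin n → ℝ :=
  fun i => ∑ js : Fin p → Fin n, A i js * ∏ j, x (js j)

/-- A `Z`-tensor: all off-diagonal entries are nonpositive. -/
def IsZTensor (p n : ℕ) (A : Fin n → (Fin p → Fin n) → ℝ) : Prop :=
  ∀ i js, (∃ j, js j ≠ i) → A i js ≤ 0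

/-- The identity tensor. -/
def identT (p n : ℕ) : Fin n → (Fin p → Fin n) → ℝ :=
  fun i js => if ∀ j, js j = i then 1 else 0

/-- Spectral radius of a tensor: sup of moduli of (real) eigenvalues. -/
def tensorSpecRad (p n : ℕ) (B : Fin n → (Fin p → Fin n) → ℝ) : ℝ :=
  sSup {r : ℝ | ∃ lam : ℝ, ∃ x : Fin n → ℝ, x ≠ 0 ∧
    (∀ i, tapp p n B x i = lam * x i ^ p) ∧ r = |lam|}

/-- A nonsingular M-tensor: `A = s I − B` with `B ≥ 0` and `s > ρ(B)`. -/
def IsMTensor (p n : ℕ) (A : Fin n → (Fin p → Fin n) → ℝ) : Prop :=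
  ∃ s : ℝ, ∃ B : Fin n → (Fin p → Fin n) → ℝ,
    (∀ i js, 0 ≤ B i js) ∧ tensorSpecRad p n B < s ∧
    ∀ i js, A i js = s * identT p n i js - B i js

/-- The diagonal-part tensor of `A`. -/
def diagT (p n : ℕ) (A : Fin n → (Fin p → Fin n) → ℝ) : Fin n → (Fin p → Fin n) → ℝ :=
  fun i js => if ∀ j, js j = i then A i (fun _ => i) else 0

/-- The majorization matrix of `A`: `M_{ij} = a_{i j … j}`. -/
def majMatrix (p n : ℕ) (A : Fin n → (Fin p → Fin n) → ℝ) : Matrix (Fin n) (Fin n) ℝ :=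
  fun i j => A i (fun _ => j)

/-- The "mixed index" part `N = M_tensor − A`: zero on constant trailing tuples,
`−A` elsewhere. -/
def NPart (p n : ℕ) (A : Fin n → (Fin p → Fin n) → ℝ) : Fin n → (Fin p → Fin n) → ℝ :=
  fun i js => if ∀ j' j'', js j' = js j'' then 0 else -A i js

/-- A nonsingular M-matrix: a Z-matrix with `M y > 0` for some `y > 0`. -/
def IsMMatrix (n : ℕ) (P : Matrix (Fin n) (Fin n) ℝ) : Prop :=
  (∀ i j, i ≠ j → P i j ≤ 0) ∧ ∃ y : Fin n → ℝ, (∀ i, 0 < y i) ∧ ∀ i, 0 < P.mulVec y i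

/-- Spectral radius of a real matrix (via its complex spectrum). -/
def matSpecRad (n : ℕ) (J : Matrix (Fin n) (Fin n) ℝ) : ℝ :=
  sSup {r : ℝ | ∃ μ ∈ spectrum ℂ (J.map (Complex.ofReal ·)), r = ‖μ‖}

/-- Irreducibility of a matrix. -/
def MatIrreducible (n : ℕ) (J : Matrix (Fin n) (Fin n) ℝ) : Prop :=
  ∀ S : Finset (Fin n), S.Nonempty → S ≠ Finset.univ → ∃ i ∈ S, ∃ j, j ∉ S ∧ J i j ≠ 0

lemma mmatrix_mono {n : ℕ} {P : Matrix (Fin n) (Fin n) ℝ} (hP : IsMMatrix n P)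
    {u v : Fin n → ℝ} (h : P.mulVec u ≤ P.mulVec v) : u ≤ v := by
  obtain ⟨hZ, y, hy, hPy⟩ := hP
  by_contra hc
  rw [Pi.le_def, not_forall] at hc
  obtain ⟨i1, hi1⟩ := hc
  push_neg at hi1
  set f : Fin n → ℝ := fun j => (u j - v j) / y j with hf
  obtain ⟨i0, -, hi0⟩ := Finset.exists_max_image Finset.univ f ⟨i1, Finset.mem_univ i1⟩
  set t : ℝ := f i0 with ht
  have htpos : 0 < t := lt_of_lt_of_le (div_pos (sub_pos.2 hi1) (hy i1)) (hi0 i1 (Finset.mem_univ i1))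
  set w : Fin n → ℝ := v + t • y - u with hw
  have hwj : ∀ j, w j = v j + t * y j - u j := fun j => rfl
  have hwnn : ∀ j, 0 ≤ w j := by
    intro j
    have := hi0 j (Finset.mem_univ j)
    rw [hf] at this
    have := (div_le_iff₀ (hy j)).1 this
    rw [hwj]; linarith
  have hw0 : w i0 = 0 := by
    have : (u i0 - v i0) / y i0 = t := rfl
    have := (div_eq_iff (ne_of_gt (hy i0))).1 this
    rw [hwj]; linarith
  have hPw : P.mulVec w = P.mulVec v + t • P.mulVec y - P.mulVec u := by
    rw [hw, Matrix.mulVec_sub, Matrix.mulVec_add, Matrix.mulVec_smul]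
  have hpos : 0 < P.mulVec w i0 := by
    rw [hPw]
    have h1 : P.mulVec u i0 ≤ P.mulVec v i0 := h i0
    have h2 : 0 < t * P.mulVec y i0 := mul_pos htpos (hPy i0)
    simp only [Pi.sub_apply, Pi.add_apply, Pi.smul_apply, smul_eq_mul]
    linarith
  have hneg : P.mulVec w i0 ≤ 0 := by
    rw [Matrix.mulVec, dotProduct]
    apply Finset.sum_nonpos
    intro j _
    rcases eq_or_ne j i0 with rfl | hj
    · rw [hw0]; simp
    · exact mul_nonpos_of_nonpos_of_nonneg (hZ i0 j (Ne.symm hj)) (hwnn j)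
  linarith

lemma mmatrix_surj {n : ℕ} {P : Matrix (Fin n) (Fin n) ℝ} (hP : IsMMatrix n P) :
    Function.Surjective P.mulVec := by
  have hinj : Function.Injective P.mulVec := by
    intro u v huv
    exact le_antisymm (mmatrix_mono hP (le_of_eq huv)) (mmatrix_mono hP (le_of_eq huv.symm))
  have := LinearMap.injective_iff_surjective (f := P.mulVecLin)
  exact this.mp hinj

lemma NPart_nonneg {p n : ℕ} {A : Fin n → (Fin p → Fin n) → ℝ} (hA : IsZTensor p n A) :
    ∀ i js, 0 ≤ NPart p n A i js := by
  intro i js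
  unfold NPart
  split_ifs with hc
  · exact le_refl _
  · refine neg_nonneg.2 (hA i js ?_)
    push_neg at hc
    obtain ⟨j', j'', hj⟩ := hc
    by_contra hcon
    push_neg at hcon
    exact hj ((hcon j').trans (hcon j'').symm)

lemma tapp_nonneg {p n : ℕ} {N : Fin n → (Fin p → Fin n) → ℝ} (hN : ∀ i js, 0 ≤ N i js)
    {x : Fin n → ℝ} (hx : 0 ≤ x) (i : Fin n) : 0 ≤ tapp p n N x i :=
  Finset.sum_nonneg fun js _ => mul_nonneg (hN i js) (Finset.prod_nonneg fun j _ => hx _)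

lemma tapp_mono {p n : ℕ} {N : Fin n → (Fin p → Fin n) → ℝ} (hN : ∀ i js, 0 ≤ N i js)
    {u v : Fin n → ℝ} (hu : 0 ≤ u) (huv : u ≤ v) (i : Fin n) :
    tapp p n N u i ≤ tapp p n N v i := by
  apply Finset.sum_le_sum
  intro js _
  exact mul_le_mul_of_nonneg_left
    (Finset.prod_le_prod (fun j _ => hu _) (fun j _ => huv _)) (hN i js)

lemma tapp_split {p n : ℕ} (hp : 0 < p) (A : Fin n → (Fin p → Fin n) → ℝ)
    (x : Fin n → ℝ) (i : Fin n) :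
    tapp p n A x i =
      (majMatrix p n A).mulVec (fun j => x j ^ p) i - tapp p n (NPart p n A) x i := by
  classical
  have hsplit := Finset.sum_filter_add_sum_filter_not Finset.univ
    (fun js : Fin p → Fin n => ∀ j' j'', js j' = js j'')
    (fun js => A i js * ∏ j, x (js j))
  have h1 : ∑ js ∈ Finset.univ.filter (fun js : Fin p → Fin n => ∀ j' j'', js j' = js j''),
      A i js * ∏ j, x (js j) = ∑ j : Fin n, A i (fun _ => j) * x j ^ p := by
    refine Finset.sum_nbij' (fun js => js ⟨0, hp⟩) (fun j => fun _ => j) ?_ ?_ ?_ ?_ ?_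
    · intro js _; exact Finset.mem_univ _
    · intro j _; simp
    · intro js hjs
      simp only [Finset.mem_filter] at hjs
      funext j'
      exact (hjs.2 j' ⟨0, hp⟩).symm
    · intro j _; rfl
    · intro js hjs
      simp only [Finset.mem_filter] at hjs
      have : (fun j => x (js j)) = fun _ : Fin p => x (js ⟨0, hp⟩) := by
        funext j'; rw [hjs.2 j' ⟨0, hp⟩]
      have hjs' : js = fun _ => js ⟨0, hp⟩ := funext fun j' => hjs.2 j' ⟨0, hp⟩
      rw [this, Finset.prod_const]
      conv_lhs => rw [hjs']
      simp
  have h2 : ∑ js ∈ Finset.univ.filter (fun js : Fin p → Fin n => ¬ ∀ j' j'', js j' = js j''),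
      A i js * ∏ j, x (js j) = - tapp p n (NPart p n A) x i := by
    rw [tapp, ← Finset.sum_neg_distrib]
    rw [Finset.sum_filter]
    apply Finset.sum_congr rfl
    intro js _
    unfold NPart
    split_ifs with hc
    · simp
    · simp [hc]
  rw [tapp, ← hsplit, h1, h2, Matrix.mulVec, dotProduct]
  unfold majMatrix
  ring

lemma tapp_continuous {p n : ℕ} (N : Fin n → (Fin p → Fin n) → ℝ) (i : Fin n) :
    Continuous (fun x : Fin n → ℝ => tapp p n N x i) := by
  apply continuous_finset_sum
  intro js _
  exact continuous_const.mul (continuous_finset_prod _ fun j _ => continuous_apply _)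

/-- for a Z-tensor `A` with majorization-matrix splitting `M = P − Q`
(`P` a nonsingular M-matrix, `Q ≥ 0`) and `b ≥ 0` with `S_g` nonempty, the iteration
`P x_{k+1}^{[m-1]} = Q x_k^{[m-1]} + N x_k^{m-1} + b`, `x₀ = 0`, is well-defined,
increasing, bounded above by every element of `S_g`, and converges to the minimal
nonnegative solution. -/
theorem stmt11 (m n : ℕ) (hm : 2 ≤ m) (A : Fin n → (Fin (m-1) → Fin n) → ℝ)
    (hA : IsZTensor (m-1) n A)
    (P Q : Matrix (Fin n) (Fin n) ℝ) (hP : IsMMatrix n P) (hQ : ∀ i j, 0 ≤ Q i j)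
    (hsplit : majMatrix (m-1) n A = P - Q)
    (b : Fin n → ℝ) (hb : 0 ≤ b)
    (hne : ∃ x : Fin n → ℝ, 0 ≤ x ∧ b ≤ tapp (m-1) n A x) :
    ∃ x : ℕ → Fin n → ℝ, x 0 = 0 ∧ (∀ k, 0 ≤ x k) ∧
      (∀ k i, P.mulVec (fun j => x (k+1) j ^ (m-1)) i =
        Q.mulVec (fun j => x k j ^ (m-1)) i +
          tapp (m-1) n (NPart (m-1) n A) (x k) i + b i) ∧
      (∀ k, x k ≤ x (k+1)) ∧
      (∀ z : Fin n → ℝ, 0 ≤ z → b ≤ tapp (m-1) n A z → ∀ k, x k ≤ z) ∧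
      ∃ xmin : Fin n → ℝ, Filter.Tendsto x Filter.atTop (nhds xmin) ∧
        0 ≤ xmin ∧ tapp (m-1) n A xmin = b ∧
        ∀ y : Fin n → ℝ, 0 ≤ y → tapp (m-1) n A y = b → xmin ≤ y := by
  classical
  have hp : 0 < m - 1 := by omega
  have hp0 : m - 1 ≠ 0 := hp.ne'
  have hN : ∀ i js, 0 ≤ NPart (m-1) n A i js := NPart_nonneg hA
  have hsurj : Function.Surjective P.mulVec := mmatrix_surj hP
  -- the iteration map
  set R : (Fin n → ℝ) → (Fin n → ℝ) :=
    fun v => Q.mulVec (fun j => v j ^ (m-1)) + tapp (m-1) n (NPart (m-1) n A) v + b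
    with hRdef
  have hRi : ∀ v i, R v i = Q.mulVec (fun j => v j ^ (m-1)) i
      + tapp (m-1) n (NPart (m-1) n A) v i + b i := fun v i => rfl
  set F : (Fin n → ℝ) → (Fin n → ℝ) :=
    fun v j => Real.rpow (Classical.choose (hsurj (R v)) j) (((m-1 : ℕ):ℝ)⁻¹) with hFdef
  set x : ℕ → Fin n → ℝ := fun k => Nat.rec (0 : Fin n → ℝ) (fun _ xk => F xk) k with hxdef
  have hx0 : x 0 = 0 := rfl
  have hxsucc : ∀ k, x (k+1) = F (x k) := fun k => rfl
  have hRnn : ∀ v, 0 ≤ v → 0 ≤ R v := by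
    intro v hv i
    rw [hRi]
    have h1 : 0 ≤ Q.mulVec (fun j => v j ^ (m-1)) i := by
      rw [Matrix.mulVec, dotProduct]
      exact Finset.sum_nonneg fun j _ => mul_nonneg (hQ i j) (pow_nonneg (hv j) _)
    have h2 : 0 ≤ tapp (m-1) n (NPart (m-1) n A) v i := tapp_nonneg hN hv i
    have h3 := hb i
    linarith
  have hstep : ∀ v, 0 ≤ v → 0 ≤ F v ∧ P.mulVec (fun j => F v j ^ (m-1)) = R v := by
    intro v hv
    have hspec : P.mulVec (Classical.choose (hsurj (R v))) = R v :=
      Classical.choose_spec (hsurj (R v))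
    have hun : 0 ≤ Classical.choose (hsurj (R v)) := by
      apply mmatrix_mono hP
      rw [hspec, Matrix.mulVec_zero]
      exact hRnn v hv
    have hFv : ∀ j, F v j ^ (m-1) = Classical.choose (hsurj (R v)) j := by
      intro j
      exact Real.rpow_inv_natCast_pow (hun j) hp0
    constructor
    · intro j
      exact Real.rpow_nonneg (hun j) _
    · rw [show (fun j => F v j ^ (m-1)) = Classical.choose (hsurj (R v)) from funext hFv]
      exact hspec
  have hnn : ∀ k, 0 ≤ x k := by
    intro k
    induction k with
    | zero => exact le_refl _
    | succ k ih => rw [hxsucc]; exact (hstep _ ih).1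
  have heqn : ∀ k, P.mulVec (fun j => x (k+1) j ^ (m-1)) = R (x k) := by
    intro k
    rw [hxsucc]
    exact (hstep _ (hnn k)).2
  have hRmono : ∀ u v, 0 ≤ u → u ≤ v → R u ≤ R v := by
    intro u v hu huv i
    rw [hRi, hRi]
    have h1 : Q.mulVec (fun j => u j ^ (m-1)) i ≤ Q.mulVec (fun j => v j ^ (m-1)) i := by
      rw [Matrix.mulVec, Matrix.mulVec, dotProduct, dotProduct]
      exact Finset.sum_le_sum fun j _ =>
        mul_le_mul_of_nonneg_left (pow_le_pow_left₀ (hu j) (huv j) _) (hQ i j)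
    have h2 := tapp_mono hN hu huv i
    linarith
  have hpowle : ∀ u v : Fin n → ℝ, 0 ≤ u → 0 ≤ v →
      ((fun j => u j ^ (m-1)) ≤ fun j => v j ^ (m-1)) → u ≤ v := by
    intro u v hu hv h j
    exact (pow_le_pow_iff_left₀ (hu j) (hv j) hp0).1 (h j)
  have hmonoseq : ∀ k, x k ≤ x (k+1) := by
    intro k
    induction k with
    | zero => rw [hx0]; exact hnn 1
    | succ k ih =>
      refine hpowle _ _ (hnn (k+1)) (hnn (k+2)) ?_
      exact mmatrix_mono hP (by rw [heqn k, heqn (k+1)]; exact hRmono _ _ (hnn k) ih)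
  have hRz : ∀ z, 0 ≤ z → b ≤ tapp (m-1) n A z → R z ≤ P.mulVec (fun j => z j ^ (m-1)) := by
    intro z hz hbz i
    have hsp := tapp_split hp A z i
    have hM : (majMatrix (m-1) n A).mulVec (fun j => z j ^ (m-1)) i
        = P.mulVec (fun j => z j ^ (m-1)) i - Q.mulVec (fun j => z j ^ (m-1)) i := by
      rw [hsplit, Matrix.sub_mulVec]
      rfl
    have hbi := hbz i
    rw [hRi]
    rw [hM] at hsp
    linarith
  have hbound : ∀ z : Fin n → ℝ, 0 ≤ z → b ≤ tapp (m-1) n A z → ∀ k, x k ≤ z := by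
    intro z hz hbz k
    induction k with
    | zero => rw [hx0]; exact hz
    | succ k ih =>
      refine hpowle _ _ (hnn (k+1)) hz ?_
      refine mmatrix_mono hP ?_
      rw [heqn k]
      exact le_trans (hRmono _ _ (hnn k) ih) (hRz z hz hbz)
  -- convergence
  obtain ⟨z0, hz0, hz0b⟩ := hne
  have hmono' : ∀ i, Monotone fun k => x k i :=
    fun i => monotone_nat_of_le_succ fun k => hmonoseq k i
  have hbdd : ∀ i, BddAbove (Set.range fun k => x k i) := by
    intro i
    refine ⟨z0 i, ?_⟩
    rintro r ⟨k, rfl⟩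
    exact hbound z0 hz0 hz0b k i
  set xmin : Fin n → ℝ := fun i => ⨆ k, x k i with hxmin
  have htendi : ∀ i, Tendsto (fun k => x k i) atTop (nhds (xmin i)) :=
    fun i => tendsto_atTop_ciSup (hmono' i) (hbdd i)
  have htend : Tendsto x atTop (nhds xmin) := tendsto_pi_nhds.2 htendi
  have hxminnn : 0 ≤ xmin := by
    intro i
    calc (0:ℝ) = x 0 i := by rw [hx0]; rfl
    _ ≤ xmin i := le_ciSup (hbdd i) 0
  -- limit equation
  have htend' : Tendsto (fun k => x (k+1)) atTop (nhds xmin) :=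
    htend.comp (tendsto_add_atTop_nat 1)
  have hcont1 : ∀ i, Continuous (fun v : Fin n → ℝ => P.mulVec (fun j => v j ^ (m-1)) i) := by
    intro i
    simp only [Matrix.mulVec, dotProduct]
    exact continuous_finset_sum _ fun j _ => continuous_const.mul ((continuous_apply j).pow _)
  have hcont2 : ∀ i, Continuous (fun v : Fin n → ℝ => R v i) := by
    intro i
    simp only [hRi]
    refine Continuous.add (Continuous.add ?_ (tapp_continuous _ i)) continuous_const
    simp only [Matrix.mulVec, dotProduct]
    exact continuous_finset_sum _ fun j _ => continuous_const.mul ((continuous_apply j).pow _)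
  have hlimeq : ∀ i, P.mulVec (fun j => xmin j ^ (m-1)) i = R xmin i := by
    intro i
    have hL1 : Tendsto (fun k => P.mulVec (fun j => x (k+1) j ^ (m-1)) i) atTop
        (nhds (P.mulVec (fun j => xmin j ^ (m-1)) i)) :=
      ((hcont1 i).tendsto xmin).comp htend'
    have hL2 : Tendsto (fun k => P.mulVec (fun j => x (k+1) j ^ (m-1)) i) atTop
        (nhds (R xmin i)) := by
      have heq : (fun k => P.mulVec (fun j => x (k+1) j ^ (m-1)) i) =
          fun k => R (x k) i := by
        funext k; rw [heqn k]
      rw [heq]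
      exact ((hcont2 i).tendsto xmin).comp htend
    exact tendsto_nhds_unique hL1 hL2
  have hsol : tapp (m-1) n A xmin = b := by
    funext i
    have hsp := tapp_split hp A xmin i
    have hM : (majMatrix (m-1) n A).mulVec (fun j => xmin j ^ (m-1)) i
        = P.mulVec (fun j => xmin j ^ (m-1)) i - Q.mulVec (fun j => xmin j ^ (m-1)) i := by
      rw [hsplit, Matrix.sub_mulVec]
      rfl
    have h1 := hlimeq i
    rw [hRi] at h1
    rw [hM, h1] at hsp
    linarith [hsp]
  refine ⟨x, hx0, hnn, ?_, hmonoseq, hbound, xmin, htend, hxminnn, hsol, ?_⟩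
  · intro k i
    rw [heqn k, hRi]
  · intro y hy hyb
    intro i
    refine ciSup_le fun k => ?_
    exact hbound y hy (le_of_eq hyb.symm) k i

end
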